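/- Let (X,d) be a compact metric space, r > 0, x, y ∈ X with d(x,y) < r, 0 < ν < r − d(x,y), and let ρ = inf{ r' : (x,y) ν-descends to a pair at distance ≤ r' }. If ρ > 0 then ρ is a local minimum value of d; that is, there exists a pair (x', y') with d(x', y') = ρ to which (x,y) descends, and d attains a local minimum at (x', y'). -/

import Mathlib

/-- The pair `(x, y)` ν-descends to `(x', y')`: there are equal-length finite ν-chains
from `x` to `x'` and from `y` to `y'` whose corresponding points are always at distance
at most `dist x y`. -/
def Descends {X : Type*} [MetricSpace X] (ν : ℝ) (x y x' y' : X) : Prop :=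
  ∃ (p : ℕ) (f g : Fin (p + 1) → X),
    f 0 = x ∧ g 0 = y ∧ f (Fin.last p) = x' ∧ g (Fin.last p) = y' ∧
    (∀ i : Fin p, dist (f i.castSucc) (f i.succ) < ν) ∧
    (∀ i : Fin p, dist (g i.castSucc) (g i.succ) < ν) ∧
    (∀ i : Fin (p + 1), dist (f i) (g i) ≤ dist x y)

/-- `m` is a local minimum value of the distance function of `X`: it is attained at a
pair `(a, b)` and `d ≥ m` on a neighborhood of `(a, b)` in `X × X`. -/
def IsLocMinVal (X : Type*) [MetricSpace X] (m : ℝ) : Prop :=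
  ∃ a b : X, dist a b = m ∧
    ∃ ε > 0, ∀ a' b' : X, dist a a' < ε → dist b b' < ε → m ≤ dist a' b'

open Filter Topology Set

lemma descends_refl {X : Type*} [MetricSpace X] (ν : ℝ) (x y : X) :
    Descends ν x y x y :=
  ⟨0, fun _ => x, fun _ => y, rfl, rfl, rfl, rfl, fun i => i.elim0, fun i => i.elim0,
    fun _ => le_refl _⟩

lemma descends_extend {X : Type*} [MetricSpace X] {ν : ℝ} {x y x' y' a b : X}
    (h : Descends ν x y x' y') (ha : dist x' a < ν) (hb : dist y' b < ν)
    (hab : dist a b ≤ dist x y) : Descends ν x y a b := by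
  obtain ⟨p, f, g, hf0, hg0, hfl, hgl, hfc, hgc, hpair⟩ := h
  refine ⟨p + 1, Fin.snoc f a, Fin.snoc g b, ?_, ?_, ?_, ?_, ?_, ?_, ?_⟩
  · rw [show (0 : Fin (p+2)) = Fin.castSucc 0 from rfl, Fin.snoc_castSucc]; exact hf0
  · rw [show (0 : Fin (p+2)) = Fin.castSucc 0 from rfl, Fin.snoc_castSucc]; exact hg0
  · simp
  · simp
  · intro i
    refine Fin.lastCases ?_ (fun j => ?_) i
    · simpa [Fin.succ_last, hfl] using ha
    · rw [Fin.succ_castSucc, Fin.snoc_castSucc, Fin.snoc_castSucc]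
      exact hfc j
  · intro i
    refine Fin.lastCases ?_ (fun j => ?_) i
    · simpa [Fin.succ_last, hgl] using hb
    · rw [Fin.succ_castSucc, Fin.snoc_castSucc, Fin.snoc_castSucc]
      exact hgc j
  · intro i
    refine Fin.lastCases ?_ (fun j => ?_) i
    · simpa using hab
    · simpa using hpair j

/-- if the infimum `ρ` of distances reachable from `(x,y)` by ν-descent is
positive, then it is attained at a pair `(x', y')` to which `(x,y)` descends, and `d`
attains a local minimum at `(x', y')` (so `ρ` is a local minimum value of `d`). -/
theorem stmt_7 {X : Type*} [MetricSpace X] [CompactSpace X] (r : ℝ) (hr : 0 < r)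
    (x y : X) (hxy : dist x y < r) (ν : ℝ) (hν0 : 0 < ν) (hν : ν < r - dist x y)
    (hρ : 0 < sInf {r' : ℝ | ∃ x' y' : X, Descends ν x y x' y' ∧ dist x' y' ≤ r'}) :
    ∃ x' y' : X, Descends ν x y x' y' ∧
      dist x' y' = sInf {r' : ℝ | ∃ x' y' : X, Descends ν x y x' y' ∧ dist x' y' ≤ r'} ∧
      ∃ ε > 0, ∀ a b : X, dist x' a < ε → dist y' b < ε → dist x' y' ≤ dist a b := by
  set S := {r' : ℝ | ∃ x' y' : X, Descends ν x y x' y' ∧ dist x' y' ≤ r'} with hSdef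
  set ρ := sInf S with hρdef
  have hbdd : BddBelow S := ⟨0, fun r' ⟨a, b, _, hle⟩ => le_trans dist_nonneg hle⟩
  have hne : S.Nonempty := ⟨dist x y, x, y, descends_refl ν x y, le_refl _⟩
  have hmem : ∀ a b : X, Descends ν x y a b → ρ ≤ dist a b := fun a b h =>
    csInf_le hbdd ⟨a, b, h, le_refl _⟩
  have hρxy : ρ ≤ dist x y := hmem x y (descends_refl ν x y)
  have hseq : ∀ n : ℕ, ∃ a b : X, Descends ν x y a b ∧ dist a b < ρ + 1/(n+1) := by
    intro n
    have h1 : ρ < ρ + 1/(n+1) := by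
      have : (0:ℝ) < 1/(n+1) := by positivity
      linarith
    obtain ⟨r', hr'S, hr'lt⟩ := exists_lt_of_csInf_lt hne h1
    obtain ⟨a, b, hd, hle⟩ := hr'S
    exact ⟨a, b, hd, lt_of_le_of_lt hle hr'lt⟩
  choose u v hdesc hlt using hseq
  obtain ⟨⟨x', y'⟩, -, φ, hφ, htend⟩ :=
    isCompact_univ.tendsto_subseq (x := fun n => ((u n, v n) : X × X)) (fun n => mem_univ _)
  have htx : Tendsto (fun n => u (φ n)) atTop (𝓝 x') :=
    (continuous_fst.tendsto _).comp htend
  have hty : Tendsto (fun n => v (φ n)) atTop (𝓝 y') :=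
    (continuous_snd.tendsto _).comp htend
  have htd : Tendsto (fun n => dist (u (φ n)) (v (φ n))) atTop (𝓝 (dist x' y')) :=
    htx.dist hty
  have h1 : ρ ≤ dist x' y' :=
    ge_of_tendsto htd (Eventually.of_forall fun n => hmem _ _ (hdesc (φ n)))
  have h2 : dist x' y' ≤ ρ := by
    have hlim : Tendsto (fun n : ℕ => ρ + 1/(n+1)) atTop (𝓝 ρ) := by
      have : Tendsto (fun n : ℕ => 1 / ((n : ℝ) + 1)) atTop (𝓝 0) :=
        tendsto_one_div_add_atTop_nhds_zero_nat
      simpa using tendsto_const_nhds.add this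
    refine le_of_tendsto_of_tendsto' htd hlim fun n => ?_
    have h3 : dist (u (φ n)) (v (φ n)) < ρ + 1/(φ n + 1) := hlt (φ n)
    have h4 : (1:ℝ)/(φ n + 1) ≤ 1/(n+1) := by
      have hn : (n:ℝ) + 1 ≤ (φ n : ℝ) + 1 := by
        have : n ≤ φ n := hφ.le_apply
        exact_mod_cast by linarith [(Nat.cast_le (α := ℝ)).2 this]
      apply one_div_le_one_div_of_le (by positivity) hn
    linarith
  have hdist : dist x' y' = ρ := le_antisymm h2 h1
  -- find a reachable pair within ν of (x', y')
  obtain ⟨N, hN⟩ := (Metric.tendsto_atTop.1 htx) ν hν0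
  obtain ⟨M, hM⟩ := (Metric.tendsto_atTop.1 hty) ν hν0
  set n := max N M
  have hux : dist (u (φ n)) x' < ν := hN n (le_max_left _ _)
  have hvy : dist (v (φ n)) y' < ν := hM n (le_max_right _ _)
  have hreach : Descends ν x y x' y' :=
    descends_extend (hdesc (φ n)) hux hvy (hdist ▸ hρxy)
  refine ⟨x', y', hreach, hdist, ν, hν0, fun a b ha hb => ?_⟩
  by_contra hcon
  push_neg at hcon
  have : Descends ν x y a b :=
    descends_extend hreach ha hb (le_trans hcon.le (hdist ▸ hρxy))
  exact absurd (hmem a b this) (by rw [← hdist] at *; linarith)
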